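/- Let F have characteristic 2 and let b, c ∈ F[x] with deg c > 2 deg b and deg c odd. Then the equation ω² + bω + c = 0 has no solution ω in the field of formal Laurent series F((1/x)) (equivalently, no solution as a formal power series in descending powers of x). -/

import Mathlib

open Polynomial

/-- The image of a polynomial in F((1/x)): evaluate at x = X⁻¹, where the
variable x corresponds to the Laurent series `single (-1) 1` of degree 1. -/
noncomputable def polyToLaurentInv (F : Type) [Field F] (p : Polynomial F) :
    LaurentSeries F :=
  Polynomial.aeval (HahnSeries.single (-1 : ℤ) (1 : F)) p

variable {F : Type} [Field F]

lemma polyToLaurentInv_coeff (p : Polynomial F) (m : ℤ) :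
    (polyToLaurentInv F p).coeff m =
      ∑ i ∈ Finset.range (p.natDegree + 1), if m = -(i : ℤ) then p.coeff i else 0 := by
  have hs : ∀ (s : Finset ℕ) (f : ℕ → LaurentSeries F),
      (∑ i ∈ s, f i).coeff m = ∑ i ∈ s, (f i).coeff m :=
    fun s f => map_sum (HahnSeries.coeff.addMonoidHom m) f s
  rw [polyToLaurentInv, Polynomial.aeval_def, Polynomial.eval₂_eq_sum_range, hs]
  refine Finset.sum_congr rfl fun i _ => ?_
  have ha : (algebraMap F (LaurentSeries F)) (p.coeff i)
      = HahnSeries.single (0 : ℤ) (p.coeff i) := by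
    rw [HahnSeries.algebraMap_apply', ← PowerSeries.C_eq_algebraMap, HahnSeries.ofPowerSeries_C,
      HahnSeries.C_apply]
  rw [HahnSeries.single_pow, one_pow, ha, HahnSeries.single_mul_single, zero_add, mul_one,
    HahnSeries.coeff_single]
  simp

lemma polyToLaurentInv_coeff_neg (p : Polynomial F) (i : ℕ) (hi : i ≤ p.natDegree) :
    (polyToLaurentInv F p).coeff (-(i : ℤ)) = p.coeff i := by
  rw [polyToLaurentInv_coeff]
  rw [Finset.sum_eq_single i]
  · simp
  · intro j _ hj
    rw [if_neg]
    simpa using fun h => hj (by exact_mod_cast h.symm)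
  · intro h; exact absurd (Finset.mem_range.2 (Nat.lt_succ_of_le hi)) h

lemma polyToLaurentInv_coeff_lt (p : Polynomial F) (m : ℤ)
    (hm : m < -(p.natDegree : ℤ)) : (polyToLaurentInv F p).coeff m = 0 := by
  rw [polyToLaurentInv_coeff]
  refine Finset.sum_eq_zero fun i hi => ?_
  rw [if_neg]
  intro h
  have : (i : ℤ) ≤ (p.natDegree : ℤ) := by
    exact_mod_cast Nat.lt_succ_iff.1 (Finset.mem_range.1 hi)
  omega

lemma polyToLaurentInv_ne_zero {p : Polynomial F} (hp : p ≠ 0) :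
    polyToLaurentInv F p ≠ 0 := by
  intro h
  have := polyToLaurentInv_coeff_neg p p.natDegree le_rfl
  rw [h, HahnSeries.coeff_zero] at this
  exact (Polynomial.leadingCoeff_ne_zero.2 hp) this.symm

lemma polyToLaurentInv_order {p : Polynomial F} (hp : p ≠ 0) :
    (polyToLaurentInv F p).order = -(p.natDegree : ℤ) := by
  have h1 : (polyToLaurentInv F p).order ≤ -(p.natDegree : ℤ) := by
    apply HahnSeries.order_le_of_coeff_ne_zero
    rw [polyToLaurentInv_coeff_neg p p.natDegree le_rfl]
    exact Polynomial.leadingCoeff_ne_zero.2 hp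
  rcases lt_or_eq_of_le h1 with h | h
  · exact absurd (polyToLaurentInv_coeff_lt p _ h)
      (mt HahnSeries.coeff_order_eq_zero.1 (polyToLaurentInv_ne_zero hp))
  · exact h

/-- char F = 2, deg c > 2 deg b, deg c odd: ω² + bω + c = 0 has no solution in
the Laurent series field F((1/x)). -/
theorem no_laurent_root_of_odd_degree
    (F : Type) [Field F] [CharP F 2] (b c : Polynomial F)
    (hodd : Odd c.natDegree) (hdeg : 2 * b.natDegree < c.natDegree) :
    ¬ ∃ ω : LaurentSeries F,
        ω ^ 2 + polyToLaurentInv F b * ω + polyToLaurentInv F c = 0 := by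
  rintro ⟨ω, h⟩
  set B := polyToLaurentInv F b with hBdef
  set C := polyToLaurentInv F c with hCdef
  have hc0 : c ≠ 0 := by rintro rfl; simp at hodd
  have hC0 : C ≠ 0 := polyToLaurentInv_ne_zero hc0
  have hOC : C.order = -(c.natDegree : ℤ) := polyToLaurentInv_order hc0
  have hω0 : ω ≠ 0 := by rintro rfl; rw [hCdef] at h; simp at h; exact hC0 h
  have hcoeff : ∀ n : ℤ, (ω ^ 2).coeff n + (B * ω).coeff n + C.coeff n = 0 := by
    intro n
    have := congrArg (fun z : LaurentSeries F => z.coeff n) h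
    simpa [HahnSeries.coeff_add] using this
  have hω2 : (ω ^ 2).order = 2 * ω.order := by
    rw [sq, HahnSeries.order_mul hω0 hω0]; ring
  have hω2coeff : (ω ^ 2).coeff (2 * ω.order) ≠ 0 := by
    rw [sq, two_mul, HahnSeries.coeff_mul_order_add_order ω ω]
    exact mul_ne_zero (HahnSeries.leadingCoeff_ne_zero.2 hω0) (HahnSeries.leadingCoeff_ne_zero.2 hω0)
  have hdegZ : 2 * (b.natDegree : ℤ) < (c.natDegree : ℤ) := by exact_mod_cast hdeg
  have hBω : ∀ n : ℤ, n < -(b.natDegree : ℤ) + ω.order → (B * ω).coeff n = 0 := by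
    intro n hn
    by_cases hb : b = 0
    · rw [hBdef, hb]; simp [polyToLaurentInv]
    · apply HahnSeries.coeff_eq_zero_of_lt_order
      rw [HahnSeries.order_mul (polyToLaurentInv_ne_zero hb) hω0, polyToLaurentInv_order hb]
      exact hn
  rcases lt_or_ge ω.order (-(b.natDegree : ℤ)) with hcase | hcase
  · -- deg ω > deg b
    have hBn : (B * ω).coeff (2 * ω.order) = 0 := hBω _ (by omega)
    rcases lt_trichotomy (2 * ω.order) C.order with h1 | h1 | h1
    · have hCn : C.coeff (2 * ω.order) = 0 := HahnSeries.coeff_eq_zero_of_lt_order h1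
      have := hcoeff (2 * ω.order)
      rw [hBn, hCn, add_zero, add_zero] at this
      exact hω2coeff this
    · rw [hOC] at h1
      obtain ⟨k, hk⟩ := hodd
      omega
    · have hA : (ω ^ 2).coeff C.order = 0 :=
        HahnSeries.coeff_eq_zero_of_lt_order (by rw [hω2]; exact h1)
      have hB2 : (B * ω).coeff C.order = 0 := hBω _ (by omega)
      have := hcoeff C.order
      rw [hA, hB2, zero_add, zero_add] at this
      exact mt HahnSeries.coeff_order_eq_zero.1 hC0 this
  · -- deg ω ≤ deg b
    have h2 : -(c.natDegree : ℤ) < 2 * ω.order := by omega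
    have hA : (ω ^ 2).coeff (-(c.natDegree : ℤ)) = 0 :=
      HahnSeries.coeff_eq_zero_of_lt_order (by rw [hω2]; exact h2)
    have hB2 : (B * ω).coeff (-(c.natDegree : ℤ)) = 0 := hBω _ (by omega)
    have := hcoeff (-(c.natDegree : ℤ))
    rw [hA, hB2, zero_add, zero_add] at this
    exact mt HahnSeries.coeff_order_eq_zero.1 hC0 (by rw [hOC]; exact this)
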